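/- Let w1, w2 be even integers ≥ 2. For P ∈ W_{w1,w2}^ℚ, the polynomial ((1,1)+(S,S))·P lies in the subspace W_{w1}^ℚ⊗E_{w2}^ℚ + E_{w1}^ℚ⊗W_{w2}^ℚ = {P1(X1)(1−X2^{w2}) + (1−X1^{w1})P2(X2) : P1 ∈ W_{w1}^ℚ, P2 ∈ W_{w2}^ℚ} if and only if P ∈ E_{w1,w2}^ℚ. Equivalently, the kernel of the map Φ_S : W_{w1,w2}^ℚ → (W_{w1}^ℚ/E_{w1}^ℚ) ⊗ (W_{w2}^ℚ/E_{w2}^ℚ), P ↦ class of ((1,1)+(S,S))·P, equals E_{w1,w2}^ℚ. -/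

import Mathlib

open MvPolynomial

/-- `SL(2, ℤ)`. -/
abbrev SL2Z := Matrix.SpecialLinearGroup (Fin 2) ℤ

/-- `S = [[0,-1],[1,0]]`. -/
def matS : SL2Z := ⟨!![0, -1; 1, 0], by norm_num [Matrix.det_fin_two_of]⟩

/-- `U = [[0,1],[-1,1]]`. -/
def matU : SL2Z := ⟨!![0, 1; -1, 1], by norm_num [Matrix.det_fin_two_of]⟩

/-- `T = [[1,1],[0,1]]`. -/
def matT : SL2Z := ⟨!![1, 1; 0, 1], by norm_num [Matrix.det_fin_two_of]⟩

/-- The weight-`w` action of `γ = [[a,b],[c,d]] ∈ SL(2,ℤ)` on a one-variable polynomial of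
degree ≤ w : `(γ·Q)(X) = (-cX+a)^w Q((dX-b)/(-cX+a))`, written coefficientwise. -/
noncomputable def polyAct1 {R : Type*} [CommRing R] (w : ℕ) (γ : SL2Z) (Q : Polynomial R) :
    Polynomial R :=
  ∑ m ∈ Finset.range (w + 1),
    Polynomial.C (Q.coeff m) *
      (Polynomial.C ((γ.1 1 1 : ℤ) : R) * Polynomial.X - Polynomial.C ((γ.1 0 1 : ℤ) : R)) ^ m *
      (Polynomial.C (-((γ.1 1 0 : ℤ) : R)) * Polynomial.X + Polynomial.C ((γ.1 0 0 : ℤ) : R)) ^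
        (w - m)

/-- `((dX-b)^m) * ((-cX+a)^n)` for `γ = [[a,b],[c,d]]`, in the variable `x`. -/
noncomputable def mfrac {R : Type*} [CommRing R] (γ : SL2Z) (x : MvPolynomial (Fin 2) R)
    (m n : ℕ) : MvPolynomial (Fin 2) R :=
  (MvPolynomial.C ((γ.1 1 1 : ℤ) : R) * x - MvPolynomial.C ((γ.1 0 1 : ℤ) : R)) ^ m *
    (MvPolynomial.C (-((γ.1 1 0 : ℤ) : R)) * x + MvPolynomial.C ((γ.1 0 0 : ℤ) : R)) ^ n

/-- The action of a pair `(γ1, γ2) ∈ SL(2,ℤ)²` on polynomials in `X1 = X 0`, `X2 = X 1` of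
degree ≤ w1 in `X1` and ≤ w2 in `X2`: the weight-`w1` action on `X1` via `γ1` and the
weight-`w2` action on `X2` via `γ2`. -/
noncomputable def polyAct2 {R : Type*} [CommRing R] (w1 w2 : ℕ) (γ1 γ2 : SL2Z)
    (P : MvPolynomial (Fin 2) R) : MvPolynomial (Fin 2) R :=
  ∑ m1 ∈ Finset.range (w1 + 1), ∑ m2 ∈ Finset.range (w2 + 1),
    MvPolynomial.C (MvPolynomial.coeff (Finsupp.single 0 m1 + Finsupp.single 1 m2) P) *
      mfrac γ1 (MvPolynomial.X 0) m1 (w1 - m1) * mfrac γ2 (MvPolynomial.X 1) m2 (w2 - m2)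

/-- Membership in `V_w^ℚ` : degree at most `w`. -/
def MemV1 (w : ℕ) (P : Polynomial ℚ) : Prop := P.natDegree ≤ w

/-- Membership in `W_w^ℚ = {P ∈ V_w^ℚ : (1+S)·P = 0, (1+U+U²)·P = 0}`. -/
def MemW1 (w : ℕ) (P : Polynomial ℚ) : Prop :=
  MemV1 w P ∧ P + polyAct1 w matS P = 0 ∧
    P + polyAct1 w matU P + polyAct1 w (matU ^ 2) P = 0

/-- Membership in `V_{w1,w2}^ℚ` : degree ≤ w1 in `X1 = X 0` and ≤ w2 in `X2 = X 1`. -/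
def MemV2 (w1 w2 : ℕ) (P : MvPolynomial (Fin 2) ℚ) : Prop :=
  MvPolynomial.degreeOf 0 P ≤ w1 ∧ MvPolynomial.degreeOf 1 P ≤ w2

/-- The embedding `P1(X) ↦ P1(X1)` of one-variable polynomials in the variable `X1 = X 0`. -/
noncomputable def toX1 (P1 : Polynomial ℚ) : MvPolynomial (Fin 2) ℚ :=
  Polynomial.aeval (MvPolynomial.X 0 : MvPolynomial (Fin 2) ℚ) P1


/-- The embedding `P2(X) ↦ P2(X2)` of one-variable polynomials in the variable `X2 = X 1`. -/
noncomputable def toX2 (P2 : Polynomial ℚ) : MvPolynomial (Fin 2) ℚ :=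
  Polynomial.aeval (MvPolynomial.X 1 : MvPolynomial (Fin 2) ℚ) P2

/-- Membership in `V_{w1,w2}^ℚ[I_D]` : lies in `V_{w1,w2}^ℚ` and is killed by
`(1,1)+(S,S)` and `(1,1)+(U,U)+(U²,U²)`. -/
def MemVID (w1 w2 : ℕ) (P : MvPolynomial (Fin 2) ℚ) : Prop :=
  MemV2 w1 w2 P ∧ P + polyAct2 w1 w2 matS matS P = 0 ∧
    P + polyAct2 w1 w2 matU matU P + polyAct2 w1 w2 (matU ^ 2) (matU ^ 2) P = 0

/-- Diagonal evaluation `P(X1,X2) ↦ P(Z,Z)`. -/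
noncomputable def diagEval (P : MvPolynomial (Fin 2) ℚ) : Polynomial ℚ :=
  MvPolynomial.aeval (fun _ : Fin 2 => (Polynomial.X : Polynomial ℚ)) P

/-- Membership in `W_{w1,w2}^ℚ` : lies in `V_{w1,w2}^ℚ` and is killed by the four Manin
relations of order 2 : `R1 = (1+S,1+S)`,
`R2 = (S,S)+(S,US)+(US,US)+(1,U)-(U²,U²)`, `R3 = (1+U+U²,1)((1,1)+(S,S))`,
`R4 = (1,1+U+U²)((1,1)+(S,S))`. -/
def MemW2 (w1 w2 : ℕ) (P : MvPolynomial (Fin 2) ℚ) : Prop :=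
  MemV2 w1 w2 P ∧
  P + polyAct2 w1 w2 matS 1 P + polyAct2 w1 w2 1 matS P + polyAct2 w1 w2 matS matS P = 0 ∧
  polyAct2 w1 w2 matS matS P + polyAct2 w1 w2 matS (matU * matS) P +
      polyAct2 w1 w2 (matU * matS) (matU * matS) P + polyAct2 w1 w2 1 matU P -
      polyAct2 w1 w2 (matU ^ 2) (matU ^ 2) P = 0 ∧
  P + polyAct2 w1 w2 matS matS P + polyAct2 w1 w2 matU 1 P +
      polyAct2 w1 w2 (matU * matS) matS P + polyAct2 w1 w2 (matU ^ 2) 1 P +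
      polyAct2 w1 w2 (matU ^ 2 * matS) matS P = 0 ∧
  P + polyAct2 w1 w2 matS matS P + polyAct2 w1 w2 1 matU P +
      polyAct2 w1 w2 matS (matU * matS) P + polyAct2 w1 w2 1 (matU ^ 2) P +
      polyAct2 w1 w2 matS (matU ^ 2 * matS) P = 0

/-- Membership in `W_{w1}^ℚ ⊗ 1 = {P1(X1) : P1 ∈ W_{w1}^ℚ}`. -/
def MemH (w1 : ℕ) (P : MvPolynomial (Fin 2) ℚ) : Prop :=
  ∃ P1 : Polynomial ℚ, MemW1 w1 P1 ∧ P = toX1 P1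

/-- Membership in `X1^{w1} ⊗ W_{w2}^ℚ = {X1^{w1}·P2(X2) : P2 ∈ W_{w2}^ℚ}`. -/
def MemVert (w1 w2 : ℕ) (P : MvPolynomial (Fin 2) ℚ) : Prop :=
  ∃ P2 : Polynomial ℚ, MemW1 w2 P2 ∧ P = MvPolynomial.X 0 ^ w1 * toX2 P2

/-- Membership in `E_{w1,w2}^ℚ = (W_{w1}^ℚ⊗1) + V_{w1,w2}^ℚ[I_D] + (X1^{w1}⊗W_{w2}^ℚ)`. -/
def MemE (w1 w2 : ℕ) (P : MvPolynomial (Fin 2) ℚ) : Prop :=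
  ∃ h d v : MvPolynomial (Fin 2) ℚ,
    MemH w1 h ∧ MemVID w1 w2 d ∧ MemVert w1 w2 v ∧ P = h + d + v

theorem polyAct2_add (w1 w2 : ℕ) (γ1 γ2 : SL2Z) (P Q : MvPolynomial (Fin 2) ℚ) :
    polyAct2 w1 w2 γ1 γ2 (P + Q) = polyAct2 w1 w2 γ1 γ2 P + polyAct2 w1 w2 γ1 γ2 Q := by
  simp [polyAct2, coeff_add, map_add, add_mul, Finset.sum_add_distrib]

theorem polyAct2_neg (w1 w2 : ℕ) (γ1 γ2 : SL2Z) (P : MvPolynomial (Fin 2) ℚ) :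
    polyAct2 w1 w2 γ1 γ2 (-P) = -polyAct2 w1 w2 γ1 γ2 P := by
  simp [polyAct2, coeff_neg, map_neg, neg_mul, Finset.sum_neg_distrib]

theorem polyAct2_sub (w1 w2 : ℕ) (γ1 γ2 : SL2Z) (P Q : MvPolynomial (Fin 2) ℚ) :
    polyAct2 w1 w2 γ1 γ2 (P - Q) = polyAct2 w1 w2 γ1 γ2 P - polyAct2 w1 w2 γ1 γ2 Q := by
  rw [sub_eq_add_neg, polyAct2_add, polyAct2_neg, sub_eq_add_neg]

theorem polyAct1_neg (w : ℕ) (γ : SL2Z) (Q : Polynomial ℚ) :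
    polyAct1 w γ (-Q) = -polyAct1 w γ Q := by
  simp [polyAct1, neg_mul, Finset.sum_neg_distrib]

theorem msingle_eq_iff {a b c d : ℕ} :
    (Finsupp.single (0 : Fin 2) a + Finsupp.single 1 b = Finsupp.single 0 c + Finsupp.single 1 d)
      ↔ (a = c ∧ b = d) := by
  constructor
  · intro h
    constructor
    · have := DFunLike.congr_fun h 0
      simpa [Finsupp.single_apply] using this
    · have := DFunLike.congr_fun h 1
      simpa [Finsupp.single_apply] using this
  · rintro ⟨rfl, rfl⟩; rfl

theorem toX1_eq {w1 : ℕ} {Q : Polynomial ℚ} (h : Q.natDegree ≤ w1) :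
    toX1 Q = ∑ i ∈ Finset.range (w1 + 1),
      MvPolynomial.monomial (Finsupp.single 0 i) (Q.coeff i) := by
  conv_lhs => rw [toX1, Q.as_sum_range' (w1+1) (Nat.lt_succ_of_le h)]
  rw [map_sum]
  refine Finset.sum_congr rfl fun i _ => ?_
  rw [Polynomial.aeval_monomial, MvPolynomial.X_pow_eq_monomial]
  have : (algebraMap ℚ (MvPolynomial (Fin 2) ℚ)) (Q.coeff i) = MvPolynomial.C (Q.coeff i) := rfl
  rw [this, MvPolynomial.C_mul_monomial, mul_one]

theorem toX2_eq {w2 : ℕ} {Q : Polynomial ℚ} (h : Q.natDegree ≤ w2) :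
    toX2 Q = ∑ i ∈ Finset.range (w2 + 1),
      MvPolynomial.monomial (Finsupp.single 1 i) (Q.coeff i) := by
  conv_lhs => rw [toX2, Q.as_sum_range' (w2+1) (Nat.lt_succ_of_le h)]
  rw [map_sum]
  refine Finset.sum_congr rfl fun i _ => ?_
  rw [Polynomial.aeval_monomial, MvPolynomial.X_pow_eq_monomial]
  have : (algebraMap ℚ (MvPolynomial (Fin 2) ℚ)) (Q.coeff i) = MvPolynomial.C (Q.coeff i) := rfl
  rw [this, MvPolynomial.C_mul_monomial, mul_one]

/-- coefficient of `toX1 Q * X1^n2` -/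
theorem coeff_toX1_mul {w1 : ℕ} {Q : Polynomial ℚ} (h : Q.natDegree ≤ w1) (n2 m1 m2 : ℕ) :
    MvPolynomial.coeff (Finsupp.single 0 m1 + Finsupp.single 1 m2)
        (toX1 Q * MvPolynomial.X 1 ^ n2) =
      if m2 = n2 then Q.coeff m1 else 0 := by
  rw [toX1_eq h, Finset.sum_mul]
  have : ∀ i ∈ Finset.range (w1+1),
      (MvPolynomial.monomial (Finsupp.single (0:Fin 2) i) (Q.coeff i)) * MvPolynomial.X 1 ^ n2
        = MvPolynomial.monomial (Finsupp.single 0 i + Finsupp.single 1 n2) (Q.coeff i) := by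
    intro i _
    rw [MvPolynomial.X_pow_eq_monomial, MvPolynomial.monomial_mul, mul_one]
  rw [Finset.sum_congr rfl this, MvPolynomial.coeff_sum]
  simp only [MvPolynomial.coeff_monomial]
  by_cases hm : m1 ≤ w1
  · rw [Finset.sum_eq_single m1]
    · simp only [msingle_eq_iff]
      by_cases h2 : m2 = n2
      · simp [h2]
      · rw [if_neg, if_neg h2]
        rintro ⟨-, rfl⟩
        exact h2 rfl
    · intro i _ hne
      rw [if_neg]
      simp only [msingle_eq_iff]
      exact fun hc => hne hc.1
    · intro hc
      exact absurd (Finset.mem_range.2 (Nat.lt_succ_of_le hm)) hc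
  · rw [Finset.sum_eq_zero]
    · rw [eq_comm]
      split_ifs
      · exact Q.coeff_eq_zero_of_natDegree_lt (lt_of_le_of_lt h (Nat.lt_of_not_le hm))
      · rfl
    · intro i hi
      rw [if_neg]
      simp only [msingle_eq_iff]
      rintro ⟨rfl, -⟩
      exact hm (Nat.lt_succ_iff.1 (Finset.mem_range.1 hi))

theorem coeff_pow_mul_toX2 {w2 : ℕ} {Q : Polynomial ℚ} (h : Q.natDegree ≤ w2) (n1 m1 m2 : ℕ) :
    MvPolynomial.coeff (Finsupp.single 0 m1 + Finsupp.single 1 m2)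
        (MvPolynomial.X 0 ^ n1 * toX2 Q) =
      if m1 = n1 then Q.coeff m2 else 0 := by
  rw [toX2_eq h, Finset.mul_sum]
  have : ∀ i ∈ Finset.range (w2+1),
      MvPolynomial.X (0:Fin 2) ^ n1 * (MvPolynomial.monomial (Finsupp.single (1:Fin 2) i) (Q.coeff i))
        = MvPolynomial.monomial (Finsupp.single 0 n1 + Finsupp.single 1 i) (Q.coeff i) := by
    intro i _
    rw [MvPolynomial.X_pow_eq_monomial, MvPolynomial.monomial_mul, one_mul]
  rw [Finset.sum_congr rfl this, MvPolynomial.coeff_sum]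
  simp only [MvPolynomial.coeff_monomial]
  by_cases hm : m2 ≤ w2
  · rw [Finset.sum_eq_single m2]
    · simp only [msingle_eq_iff]
      by_cases h2 : m1 = n1
      · simp [h2, eq_comm]
      · rw [if_neg, if_neg h2]
        rintro ⟨rfl, -⟩
        exact h2 rfl
    · intro i _ hne
      rw [if_neg]
      simp only [msingle_eq_iff]
      exact fun hc => hne hc.2
    · intro hc
      exact absurd (Finset.mem_range.2 (Nat.lt_succ_of_le hm)) hc
  · rw [Finset.sum_eq_zero]
    · rw [eq_comm]
      split_ifs
      · exact Q.coeff_eq_zero_of_natDegree_lt (lt_of_le_of_lt h (Nat.lt_of_not_le hm))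
      · rfl
    · intro i hi
      rw [if_neg]
      simp only [msingle_eq_iff]
      rintro ⟨-, rfl⟩
      exact hm (Nat.lt_succ_iff.1 (Finset.mem_range.1 hi))

theorem toX1_polyAct1 (w : ℕ) (γ : SL2Z) (Q : Polynomial ℚ) :
    toX1 (polyAct1 w γ Q) = ∑ m ∈ Finset.range (w + 1),
      MvPolynomial.C (Q.coeff m) * mfrac γ (MvPolynomial.X 0) m (w - m) := by
  rw [toX1, polyAct1, map_sum]
  refine Finset.sum_congr rfl fun m _ => ?_
  simp only [map_mul, map_pow, map_sub, map_add, Polynomial.aeval_C, Polynomial.aeval_X, mfrac]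
  simp only [MvPolynomial.algebraMap_eq, map_neg, neg_mul, mul_assoc]

theorem toX2_polyAct1 (w : ℕ) (γ : SL2Z) (Q : Polynomial ℚ) :
    toX2 (polyAct1 w γ Q) = ∑ m ∈ Finset.range (w + 1),
      MvPolynomial.C (Q.coeff m) * mfrac γ (MvPolynomial.X 1) m (w - m) := by
  rw [toX2, polyAct1, map_sum]
  refine Finset.sum_congr rfl fun m _ => ?_
  simp only [map_mul, map_pow, map_sub, map_add, Polynomial.aeval_C, Polynomial.aeval_X, mfrac]
  simp only [MvPolynomial.algebraMap_eq, map_neg, neg_mul, mul_assoc]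

/-- structural lemma: action on `toX1 Q * X2^n2`. -/
theorem polyAct2_toX1_mul {w1 w2 : ℕ} {Q : Polynomial ℚ} (h : Q.natDegree ≤ w1)
    {n2 : ℕ} (hn : n2 ≤ w2) (γ1 γ2 : SL2Z) :
    polyAct2 w1 w2 γ1 γ2 (toX1 Q * MvPolynomial.X 1 ^ n2) =
      toX1 (polyAct1 w1 γ1 Q) * mfrac γ2 (MvPolynomial.X 1) n2 (w2 - n2) := by
  rw [polyAct2, toX1_polyAct1, Finset.sum_mul]
  refine Finset.sum_congr rfl fun m1 _ => ?_
  rw [Finset.sum_eq_single n2]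
  · rw [coeff_toX1_mul h, if_pos rfl, mul_assoc]
  · intro m2 _ hne
    rw [coeff_toX1_mul h, if_neg hne, map_zero, zero_mul, zero_mul]
  · intro hc
    exact absurd (Finset.mem_range.2 (Nat.lt_succ_of_le hn)) hc

/-- structural lemma: action on `X1^n1 * toX2 Q`. -/
theorem polyAct2_pow_mul_toX2 {w1 w2 : ℕ} {Q : Polynomial ℚ} (h : Q.natDegree ≤ w2)
    {n1 : ℕ} (hn : n1 ≤ w1) (γ1 γ2 : SL2Z) :
    polyAct2 w1 w2 γ1 γ2 (MvPolynomial.X 0 ^ n1 * toX2 Q) =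
      mfrac γ1 (MvPolynomial.X 0) n1 (w1 - n1) * toX2 (polyAct1 w2 γ2 Q) := by
  rw [polyAct2, toX2_polyAct1, Finset.mul_sum]
  rw [Finset.sum_eq_single n1]
  · refine Finset.sum_congr rfl fun m2 _ => ?_
    rw [coeff_pow_mul_toX2 h, if_pos rfl]
    ring
  · intro m1 _ hne
    refine Finset.sum_eq_zero fun m2 _ => ?_
    rw [coeff_pow_mul_toX2 h, if_neg hne, map_zero, zero_mul, zero_mul]
  · intro hc
    exact absurd (Finset.mem_range.2 (Nat.lt_succ_of_le hn)) hc

/-! ### 4-variable homogenization machinery -/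

/-- substitution variables for the action of `(γ1, γ2)` on 4-variable polynomials -/
noncomputable def subv (γ1 γ2 : SL2Z) : Fin 4 → MvPolynomial (Fin 4) ℚ
  | 0 => MvPolynomial.C ((γ1.1 1 1 : ℤ) : ℚ) * MvPolynomial.X 0 +
      MvPolynomial.C (-((γ1.1 0 1 : ℤ) : ℚ)) * MvPolynomial.X 1
  | 1 => MvPolynomial.C (-((γ1.1 1 0 : ℤ) : ℚ)) * MvPolynomial.X 0 +
      MvPolynomial.C ((γ1.1 0 0 : ℤ) : ℚ) * MvPolynomial.X 1
  | 2 => MvPolynomial.C ((γ2.1 1 1 : ℤ) : ℚ) * MvPolynomial.X 2 +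
      MvPolynomial.C (-((γ2.1 0 1 : ℤ) : ℚ)) * MvPolynomial.X 3
  | 3 => MvPolynomial.C (-((γ2.1 1 0 : ℤ) : ℚ)) * MvPolynomial.X 2 +
      MvPolynomial.C ((γ2.1 0 0 : ℤ) : ℚ) * MvPolynomial.X 3

theorem coe_mul_entry (γ δ : SL2Z) (i j : Fin 2) :
    (((γ * δ).1 i j : ℤ) : ℚ) = (γ.1 i 0 : ℤ) * (δ.1 0 j : ℤ) + (γ.1 i 1 : ℤ) * (δ.1 1 j : ℤ) := by
  rw [Matrix.SpecialLinearGroup.coe_mul, Matrix.mul_apply, Fin.sum_univ_two]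
  push_cast
  ring

theorem subv_comp (γ1 γ2 δ1 δ2 : SL2Z) (i : Fin 4) :
    MvPolynomial.bind₁ (subv γ1 γ2) (subv δ1 δ2 i) = subv (γ1 * δ1) (γ2 * δ2) i := by
  fin_cases i <;>
  · simp only [subv, map_add, map_mul, MvPolynomial.bind₁_X_right, MvPolynomial.bind₁_C_right]
    simp only [coe_mul_entry, neg_add, map_add, map_mul, map_neg]
    ring

/-- the exponent finsupp `(a, b, c, d)` on `Fin 4` -/
noncomputable def quadS (a b c d : ℕ) : Fin 4 →₀ ℕ :=
  Finsupp.single 0 a + Finsupp.single 1 b + Finsupp.single 2 c + Finsupp.single 3 d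

theorem quadS_apply_0 (a b c d : ℕ) : quadS a b c d 0 = a := by
  simp [quadS, Finsupp.single_apply]
theorem quadS_apply_1 (a b c d : ℕ) : quadS a b c d 1 = b := by
  simp [quadS, Finsupp.single_apply]
theorem quadS_apply_2 (a b c d : ℕ) : quadS a b c d 2 = c := by
  simp [quadS, Finsupp.single_apply]
theorem quadS_apply_3 (a b c d : ℕ) : quadS a b c d 3 = d := by
  simp [quadS, Finsupp.single_apply]

theorem quadS_eq_self (u : Fin 4 →₀ ℕ) : quadS (u 0) (u 1) (u 2) (u 3) = u := by
  ext j
  fin_cases j <;> simp [quadS, Finsupp.single_apply]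

/-- the weight function : variables 0,1 have bidegree (1,0), variables 2,3 have (0,1). -/
def wtf : Fin 4 → ℕ × ℕ := ![(1,0), (1,0), (0,1), (0,1)]

theorem weight_quadS (a b c d : ℕ) : Finsupp.weight wtf (quadS a b c d) = (a + b, c + d) := by
  have h : ∀ (i : Fin 4) (n : ℕ), Finsupp.weight wtf (Finsupp.single i n) = n • wtf i := by
    intro i n
    rw [Finsupp.weight_apply, Finsupp.sum_single_index]
    exact zero_smul _ _
  simp only [quadS, map_add, h]
  simp [wtf, Prod.ext_iff, Fin.isValue]

/-- homogenization of a 2-variable polynomial -/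
noncomputable def hom2 (w1 w2 : ℕ) (P : MvPolynomial (Fin 2) ℚ) : MvPolynomial (Fin 4) ℚ :=
  ∑ m1 ∈ Finset.range (w1 + 1), ∑ m2 ∈ Finset.range (w2 + 1),
    MvPolynomial.monomial (quadS m1 (w1 - m1) m2 (w2 - m2))
      (MvPolynomial.coeff (Finsupp.single 0 m1 + Finsupp.single 1 m2) P)

/-- dehomogenization -/
noncomputable def deh : MvPolynomial (Fin 4) ℚ →ₐ[ℚ] MvPolynomial (Fin 2) ℚ :=
  MvPolynomial.aeval (![MvPolynomial.X 0, 1, MvPolynomial.X 1, 1])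

theorem hom2_isHomogeneous (w1 w2 : ℕ) (P : MvPolynomial (Fin 2) ℚ) :
    MvPolynomial.IsWeightedHomogeneous wtf (hom2 w1 w2 P) (w1, w2) := by
  refine MvPolynomial.IsWeightedHomogeneous.sum _ _ _ fun m1 h1 => ?_
  refine MvPolynomial.IsWeightedHomogeneous.sum _ _ _ fun m2 h2 => ?_
  refine MvPolynomial.isWeightedHomogeneous_monomial _ _ _ ?_
  rw [weight_quadS]
  rw [Finset.mem_range, Nat.lt_succ_iff] at h1 h2
  rw [Nat.add_sub_cancel' h1, Nat.add_sub_cancel' h2]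

theorem IsWH_pow {p : MvPolynomial (Fin 4) ℚ} {m : ℕ × ℕ}
    (hp : MvPolynomial.IsWeightedHomogeneous wtf p m) (n : ℕ) :
    MvPolynomial.IsWeightedHomogeneous wtf (p ^ n) (n • m) := by
  induction n with
  | zero => simpa using MvPolynomial.isWeightedHomogeneous_one (R := ℚ) wtf
  | succ k ih =>
    rw [pow_succ, succ_nsmul]
    exact ih.mul hp

theorem CX_hom (c : ℚ) (i : Fin 4) :
    MvPolynomial.IsWeightedHomogeneous wtf (MvPolynomial.C c * MvPolynomial.X i) (wtf i) := by
  have := (MvPolynomial.isWeightedHomogeneous_C (R := ℚ) wtf c).mul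
    (MvPolynomial.isWeightedHomogeneous_X ℚ wtf i)
  rwa [zero_add] at this

theorem hom_lin (c d : ℚ) (i j : Fin 4) (m : ℕ × ℕ) (hi : wtf i = m) (hj : wtf j = m) :
    MvPolynomial.IsWeightedHomogeneous wtf
      (MvPolynomial.C c * MvPolynomial.X i + MvPolynomial.C d * MvPolynomial.X j) m :=
  (hi ▸ CX_hom c i).add (hj ▸ CX_hom d j)

theorem subv_isHomogeneous (γ1 γ2 : SL2Z) (i : Fin 4) :
    MvPolynomial.IsWeightedHomogeneous wtf (subv γ1 γ2 i) (wtf i) := by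
  fin_cases i <;>
    exact hom_lin _ _ _ _ _ (by simp [wtf]) (by simp [wtf])

theorem bind₁_subv_isHomogeneous (γ1 γ2 : SL2Z) {Q : MvPolynomial (Fin 4) ℚ} {m : ℕ × ℕ}
    (hQ : MvPolynomial.IsWeightedHomogeneous wtf Q m) :
    MvPolynomial.IsWeightedHomogeneous wtf (MvPolynomial.bind₁ (subv γ1 γ2) Q) m := by
  conv_lhs => rw [← Q.support_sum_monomial_coeff]
  rw [map_sum]
  refine MvPolynomial.IsWeightedHomogeneous.sum _ _ _ fun u hu => ?_
  rw [MvPolynomial.bind₁_monomial]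
  have hprod : MvPolynomial.IsWeightedHomogeneous wtf
      (∏ i ∈ u.support, subv γ1 γ2 i ^ u i) (∑ i ∈ u.support, u i • wtf i) :=
    MvPolynomial.IsWeightedHomogeneous.prod _ _ _
      (fun i _ => IsWH_pow (subv_isHomogeneous γ1 γ2 i) (u i))
  have hw : (∑ i ∈ u.support, u i • wtf i) = m := by
    rw [← hQ (MvPolynomial.mem_support_iff.1 hu)]
    rw [Finsupp.weight_apply]
    rfl
  rw [hw] at hprod
  have := (MvPolynomial.isWeightedHomogeneous_C (R := ℚ) wtf
    (MvPolynomial.coeff u Q)).mul hprod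
  rwa [zero_add] at this

theorem prod_support_pow (f : Fin 4 → MvPolynomial (Fin 4) ℚ) (u : Fin 4 →₀ ℕ) :
    ∏ i ∈ u.support, f i ^ u i = ∏ i : Fin 4, f i ^ u i := by
  apply Finset.prod_subset (Finset.subset_univ _)
  intro i _ hi
  rw [Finsupp.notMem_support_iff.1 hi, pow_zero]

theorem bind₁_monomial' (f : Fin 4 → MvPolynomial (Fin 4) ℚ) (u : Fin 4 →₀ ℕ) (r : ℚ) :
    MvPolynomial.bind₁ f (MvPolynomial.monomial u r) =
      MvPolynomial.C r * (f 0 ^ u 0 * f 1 ^ u 1 * f 2 ^ u 2 * f 3 ^ u 3) := by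
  rw [MvPolynomial.bind₁_monomial, prod_support_pow, Fin.prod_univ_four]

theorem deh_X0 : deh (MvPolynomial.X 0) = MvPolynomial.X 0 := by simp [deh]
theorem deh_X1 : deh (MvPolynomial.X 1) = (1 : MvPolynomial (Fin 2) ℚ) := by simp [deh]
theorem deh_X2 : deh (MvPolynomial.X 2) = MvPolynomial.X 1 := by simp [deh]
theorem deh_X3 : deh (MvPolynomial.X 3) = (1 : MvPolynomial (Fin 2) ℚ) := by simp [deh]

theorem polyAct2_eq (w1 w2 : ℕ) (γ1 γ2 : SL2Z) (P : MvPolynomial (Fin 2) ℚ) :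
    polyAct2 w1 w2 γ1 γ2 P = deh (MvPolynomial.bind₁ (subv γ1 γ2) (hom2 w1 w2 P)) := by
  rw [polyAct2, hom2, map_sum, map_sum]
  refine Finset.sum_congr rfl fun m1 _ => ?_
  rw [map_sum, map_sum]
  refine Finset.sum_congr rfl fun m2 _ => ?_
  rw [bind₁_monomial']
  rw [quadS_apply_0, quadS_apply_1, quadS_apply_2, quadS_apply_3]
  rw [map_mul, map_mul, map_mul, map_mul, map_pow, map_pow, map_pow, map_pow]
  have hc : ∀ c : ℚ, deh (MvPolynomial.C c) = MvPolynomial.C c := fun c => by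
    simp [deh]
  simp only [subv, map_add, map_mul, hc, deh_X0, deh_X1, deh_X2, deh_X3, mfrac,
    sub_eq_add_neg, map_neg, mul_one]
  ring

theorem mono2 (a b : ℕ) (r : ℚ) :
    MvPolynomial.C r * MvPolynomial.X (0:Fin 2) ^ a * MvPolynomial.X 1 ^ b =
      MvPolynomial.monomial (Finsupp.single 0 a + Finsupp.single 1 b) r := by
  rw [MvPolynomial.X_pow_eq_monomial, MvPolynomial.X_pow_eq_monomial,
    MvPolynomial.C_mul_monomial, MvPolynomial.monomial_mul, mul_one, mul_one]

theorem deh_monomial (u : Fin 4 →₀ ℕ) (r : ℚ) :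
    deh (MvPolynomial.monomial u r) =
      MvPolynomial.monomial (Finsupp.single 0 (u 0) + Finsupp.single 1 (u 2)) r := by
  have : deh (MvPolynomial.monomial u r) =
      deh ((MvPolynomial.C r : MvPolynomial (Fin 4) ℚ) *
        (MvPolynomial.X 0 ^ u 0 * MvPolynomial.X 1 ^ u 1 *
         MvPolynomial.X 2 ^ u 2 * MvPolynomial.X 3 ^ u 3)) := by
    congr 1
    rw [← bind₁_monomial' MvPolynomial.X u r, MvPolynomial.bind₁_X_left]
    simp
  rw [this]
  have hc : deh (MvPolynomial.C r : MvPolynomial (Fin 4) ℚ) = MvPolynomial.C r := by simp [deh]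
  rw [map_mul, map_mul, map_mul, map_mul, map_pow, map_pow, map_pow, map_pow, hc,
    deh_X0, deh_X1, deh_X2, deh_X3, one_pow, one_pow, mul_one, mul_one, ← mul_assoc, ← mono2]

theorem hom2_monomial2 {w1 w2 a b : ℕ} (ha : a ≤ w1) (hb : b ≤ w2) (r : ℚ) :
    hom2 w1 w2 (MvPolynomial.monomial (Finsupp.single 0 a + Finsupp.single 1 b) r) =
      MvPolynomial.monomial (quadS a (w1 - a) b (w2 - b)) r := by
  rw [hom2]
  refine Eq.trans (Finset.sum_eq_single a ?_ ?_) ?_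
  · intro m1 _ hne
    refine Finset.sum_eq_zero fun m2 _ => ?_
    rw [MvPolynomial.coeff_monomial, if_neg, map_zero]
    simp only [msingle_eq_iff]
    rintro ⟨rfl, -⟩; exact hne rfl
  · intro hc; exact absurd (Finset.mem_range.2 (Nat.lt_succ_of_le ha)) hc
  refine Eq.trans (Finset.sum_eq_single b ?_ ?_) ?_
  · intro m2 _ hne
    rw [MvPolynomial.coeff_monomial, if_neg, map_zero]
    simp only [msingle_eq_iff]
    rintro ⟨-, rfl⟩; exact hne rfl
  · intro hc; exact absurd (Finset.mem_range.2 (Nat.lt_succ_of_le hb)) hc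
  rw [MvPolynomial.coeff_monomial, if_pos rfl]

theorem hom2_sum {w1 w2 : ℕ} {ι : Type*} (s : Finset ι) (f : ι → MvPolynomial (Fin 2) ℚ) :
    hom2 w1 w2 (∑ i ∈ s, f i) = ∑ i ∈ s, hom2 w1 w2 (f i) := by
  simp only [hom2, MvPolynomial.coeff_sum, map_sum]
  exact Eq.trans (Finset.sum_congr rfl fun m1 _ => Finset.sum_comm) Finset.sum_comm

theorem hom2_deh {w1 w2 : ℕ} {Q : MvPolynomial (Fin 4) ℚ}
    (hQ : MvPolynomial.IsWeightedHomogeneous wtf Q (w1, w2)) :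
    hom2 w1 w2 (deh Q) = Q := by
  conv_lhs => rw [← Q.support_sum_monomial_coeff]
  conv_rhs => rw [← Q.support_sum_monomial_coeff]
  rw [map_sum, hom2_sum]
  refine Finset.sum_congr rfl fun u hu => ?_
  have hw : u 0 + u 1 = w1 ∧ u 2 + u 3 = w2 := by
    have h1 := hQ (MvPolynomial.mem_support_iff.1 hu)
    rw [← quadS_eq_self u, weight_quadS] at h1
    exact ⟨congrArg Prod.fst h1, congrArg Prod.snd h1⟩
  rw [deh_monomial, hom2_monomial2 (le_of_add_le_left hw.1.le) (le_of_add_le_left hw.2.le)]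
  have e1 : w1 - u 0 = u 1 := by omega
  have e2 : w2 - u 2 = u 3 := by omega
  rw [e1, e2, quadS_eq_self]

theorem polyAct2_comp (w1 w2 : ℕ) (γ1 γ2 δ1 δ2 : SL2Z) (P : MvPolynomial (Fin 2) ℚ) :
    polyAct2 w1 w2 γ1 γ2 (polyAct2 w1 w2 δ1 δ2 P) = polyAct2 w1 w2 (γ1 * δ1) (γ2 * δ2) P := by
  rw [polyAct2_eq w1 w2 δ1 δ2, polyAct2_eq w1 w2 γ1 γ2,
    hom2_deh (bind₁_subv_isHomogeneous δ1 δ2 (hom2_isHomogeneous w1 w2 P)),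
    polyAct2_eq w1 w2 (γ1 * δ1) (γ2 * δ2)]
  refine congrArg (⇑deh) ?_
  rw [MvPolynomial.bind₁_bind₁]
  have h : (fun i => MvPolynomial.bind₁ (subv γ1 γ2) (subv δ1 δ2 i)) =
      subv (γ1 * δ1) (γ2 * δ2) := funext (subv_comp γ1 γ2 δ1 δ2)
  rw [h]

/-! ### matrix entries and special values of `mfrac` -/

theorem matS_00 : ((matS.1 0 0 : ℤ) : ℚ) = 0 := by norm_num [matS]
theorem matS_01 : ((matS.1 0 1 : ℤ) : ℚ) = -1 := by norm_num [matS]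
theorem matS_10 : ((matS.1 1 0 : ℤ) : ℚ) = 1 := by norm_num [matS]
theorem matS_11 : ((matS.1 1 1 : ℤ) : ℚ) = 0 := by norm_num [matS]

theorem mfrac_one (x : MvPolynomial (Fin 2) ℚ) (m n : ℕ) : mfrac 1 x m n = x ^ m := by
  simp [mfrac, Matrix.SpecialLinearGroup.coe_one, Matrix.one_apply]

theorem mfrac_S (x : MvPolynomial (Fin 2) ℚ) (m n : ℕ) : mfrac matS x m n = (-x) ^ n := by
  rw [mfrac, matS_00, matS_01, matS_10, matS_11]
  simp

theorem matU_entries : ((matU.1 0 0 : ℤ) : ℚ) = 0 ∧ ((matU.1 0 1 : ℤ) : ℚ) = 1 ∧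
    ((matU.1 1 0 : ℤ) : ℚ) = -1 ∧ ((matU.1 1 1 : ℤ) : ℚ) = 1 := by norm_num [matU]

theorem mfrac_U (x : MvPolynomial (Fin 2) ℚ) (m n : ℕ) :
    mfrac matU x m n = (x - 1) ^ m * x ^ n := by
  rw [mfrac, matU_entries.1, matU_entries.2.1, matU_entries.2.2.1, matU_entries.2.2.2]
  simp

theorem matUS_entries : (((matU * matS).1 0 0 : ℤ) : ℚ) = 1 ∧
    (((matU * matS).1 0 1 : ℤ) : ℚ) = 0 ∧ (((matU * matS).1 1 0 : ℤ) : ℚ) = 1 ∧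
    (((matU * matS).1 1 1 : ℤ) : ℚ) = 1 := by
  simp only [coe_mul_entry]
  norm_num [coe_mul_entry, matU, matS]

theorem mfrac_US (x : MvPolynomial (Fin 2) ℚ) (m n : ℕ) :
    mfrac (matU * matS) x m n = x ^ m * (1 - x) ^ n := by
  rw [mfrac, matUS_entries.1, matUS_entries.2.1, matUS_entries.2.2.1, matUS_entries.2.2.2]
  simp only [map_neg, map_one, map_zero, one_mul, sub_zero, neg_mul, neg_neg]
  ring

theorem matU2_entries : (((matU ^ 2).1 0 0 : ℤ) : ℚ) = -1 ∧
    (((matU ^ 2).1 0 1 : ℤ) : ℚ) = 1 ∧ (((matU ^ 2).1 1 0 : ℤ) : ℚ) = -1 ∧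
    (((matU ^ 2).1 1 1 : ℤ) : ℚ) = 0 := by
  rw [pow_two]
  simp only [coe_mul_entry]
  norm_num [coe_mul_entry, matU]

theorem mfrac_U2 (x : MvPolynomial (Fin 2) ℚ) (m n : ℕ) :
    mfrac (matU ^ 2) x m n = (-1) ^ m * (x - 1) ^ n := by
  rw [mfrac, matU2_entries.1, matU2_entries.2.1, matU2_entries.2.2.1, matU2_entries.2.2.2]
  simp only [map_neg, map_one, map_zero, one_mul, sub_zero, neg_mul, neg_neg]
  ring

theorem polyAct1_one {w : ℕ} {Q : Polynomial ℚ} (h : Q.natDegree ≤ w) :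
    polyAct1 w 1 Q = Q := by
  rw [polyAct1]
  conv_rhs => rw [Q.as_sum_range' (w+1) (Nat.lt_succ_of_le h)]
  refine Finset.sum_congr rfl fun m _ => ?_
  simp [Matrix.SpecialLinearGroup.coe_one, Matrix.one_apply,
    Polynomial.C_mul_X_pow_eq_monomial]

theorem natDegree_lin_le (a b : ℚ) :
    (Polynomial.C a * Polynomial.X - Polynomial.C b).natDegree ≤ 1 := by
  refine le_trans (Polynomial.natDegree_sub_le _ _) ?_
  simp only [Polynomial.natDegree_C, max_le_iff]
  exact ⟨le_trans (Polynomial.natDegree_C_mul_le _ _) Polynomial.natDegree_X_le, Nat.zero_le 1⟩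

theorem natDegree_lin_le' (a b : ℚ) :
    (Polynomial.C a * Polynomial.X + Polynomial.C b).natDegree ≤ 1 := by
  have := natDegree_lin_le a (-b)
  rwa [map_neg, sub_neg_eq_add] at this

theorem polyAct1_natDegree_le (w : ℕ) (γ : SL2Z) (Q : Polynomial ℚ) :
    (polyAct1 w γ Q).natDegree ≤ w := by
  refine Polynomial.natDegree_sum_le_of_forall_le _ _ fun m hm => ?_
  rw [Finset.mem_range, Nat.lt_succ_iff] at hm
  refine le_trans (Polynomial.natDegree_mul_le) ?_
  have h1 : (Polynomial.C (Q.coeff m) *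
      (Polynomial.C ((γ.1 1 1 : ℤ) : ℚ) * Polynomial.X -
        Polynomial.C ((γ.1 0 1 : ℤ) : ℚ)) ^ m).natDegree ≤ m := by
    refine le_trans (Polynomial.natDegree_mul_le) ?_
    simp only [Polynomial.natDegree_C, zero_add]
    refine le_trans (Polynomial.natDegree_pow_le) ?_
    calc m * (Polynomial.C ((γ.1 1 1 : ℤ) : ℚ) * Polynomial.X -
          Polynomial.C ((γ.1 0 1 : ℤ) : ℚ)).natDegree ≤ m * 1 :=
        Nat.mul_le_mul_left m (natDegree_lin_le _ _)
      _ = m := mul_one m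
  have h2 : ((Polynomial.C (-((γ.1 1 0 : ℤ) : ℚ)) * Polynomial.X +
      Polynomial.C ((γ.1 0 0 : ℤ) : ℚ)) ^ (w - m)).natDegree ≤ w - m := by
    refine le_trans (Polynomial.natDegree_pow_le) ?_
    calc (w - m) * (Polynomial.C (-((γ.1 1 0 : ℤ) : ℚ)) * Polynomial.X +
          Polynomial.C ((γ.1 0 0 : ℤ) : ℚ)).natDegree ≤ (w - m) * 1 :=
        Nat.mul_le_mul_left _ (natDegree_lin_le' _ _)
      _ = w - m := mul_one _
  omega

/-! ### degree bounds and hom lemmas -/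

theorem toX1_add (a b : Polynomial ℚ) : toX1 (a + b) = toX1 a + toX1 b := by simp [toX1]
theorem toX1_neg (a : Polynomial ℚ) : toX1 (-a) = -toX1 a := by simp [toX1]
theorem toX2_add (a b : Polynomial ℚ) : toX2 (a + b) = toX2 a + toX2 b := by simp [toX2]
theorem toX2_neg (a : Polynomial ℚ) : toX2 (-a) = -toX2 a := by simp [toX2]
theorem toX1_zero : toX1 0 = 0 := by simp [toX1]
theorem toX2_zero : toX2 0 = 0 := by simp [toX2]

theorem degreeOf_monomial_le (j : Fin 2) (u : Fin 2 →₀ ℕ) (c : ℚ) :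
    MvPolynomial.degreeOf j (MvPolynomial.monomial u c) ≤ u j := by
  rw [MvPolynomial.degreeOf_le_iff]
  intro m hm
  rw [MvPolynomial.mem_support_iff, MvPolynomial.coeff_monomial] at hm
  by_cases h : u = m
  · subst h; exact le_rfl
  · rw [if_neg h] at hm; exact absurd rfl hm

theorem memV2_toX1 {w1 : ℕ} (w2 : ℕ) {Q : Polynomial ℚ} (h : Q.natDegree ≤ w1) :
    MemV2 w1 w2 (toX1 Q) := by
  constructor <;>
  · rw [toX1_eq h]
    refine le_trans (MvPolynomial.degreeOf_sum_le _ _ _) ?_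
    refine Finset.sup_le fun i hi => ?_
    refine le_trans (degreeOf_monomial_le _ _ _) ?_
    simp only [Finsupp.single_apply]
    first
      | simpa using Nat.lt_succ_iff.1 (Finset.mem_range.1 hi)
      | simp

theorem memV2_vert (w1 : ℕ) {w2 : ℕ} {Q : Polynomial ℚ} (h : Q.natDegree ≤ w2) :
    MemV2 w1 w2 (MvPolynomial.X 0 ^ w1 * toX2 Q) := by
  have hrw : MvPolynomial.X (0 : Fin 2) ^ w1 * toX2 Q =
      ∑ i ∈ Finset.range (w2 + 1),
        MvPolynomial.monomial (Finsupp.single 0 w1 + Finsupp.single 1 i) (Q.coeff i) := by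
    rw [toX2_eq h, Finset.mul_sum]
    refine Finset.sum_congr rfl fun i _ => ?_
    rw [MvPolynomial.X_pow_eq_monomial, MvPolynomial.monomial_mul, one_mul]
  constructor <;>
  · rw [hrw]
    refine le_trans (MvPolynomial.degreeOf_sum_le _ _ _) ?_
    refine Finset.sup_le fun i hi => ?_
    refine le_trans (degreeOf_monomial_le _ _ _) ?_
    simp only [Finsupp.add_apply, Finsupp.single_apply]
    first
      | simpa using Nat.lt_succ_iff.1 (Finset.mem_range.1 hi)
      | simp

theorem memV2_sub {w1 w2 : ℕ} {p q : MvPolynomial (Fin 2) ℚ} (hp : MemV2 w1 w2 p)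
    (hq : MemV2 w1 w2 q) : MemV2 w1 w2 (p - q) :=
  ⟨le_trans (MvPolynomial.degreeOf_sub_le _ _ _) (max_le hp.1 hq.1),
   le_trans (MvPolynomial.degreeOf_sub_le _ _ _) (max_le hp.2 hq.2)⟩

theorem MemW1_neg {w : ℕ} {Q : Polynomial ℚ} (h : MemW1 w Q) : MemW1 w (-Q) := by
  obtain ⟨h1, h2, h3⟩ := h
  refine ⟨?_, ?_, ?_⟩
  · rw [MemV1, Polynomial.natDegree_neg]; exact h1
  · rw [polyAct1_neg]; linear_combination -h2
  · rw [polyAct1_neg, polyAct1_neg]; linear_combination -h3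

/-! ### action values on the two special subspaces -/

theorem act_toX1 {w1 w2 : ℕ} {Q : Polynomial ℚ} (h : Q.natDegree ≤ w1) (γ1 γ2 : SL2Z) :
    polyAct2 w1 w2 γ1 γ2 (toX1 Q) =
      toX1 (polyAct1 w1 γ1 Q) * mfrac γ2 (MvPolynomial.X 1) 0 w2 := by
  have := polyAct2_toX1_mul (w2 := w2) h (Nat.zero_le w2) γ1 γ2
  rwa [pow_zero, mul_one, Nat.sub_zero] at this

theorem act_toX2 {w1 w2 : ℕ} {Q : Polynomial ℚ} (h : Q.natDegree ≤ w2) (γ1 γ2 : SL2Z) :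
    polyAct2 w1 w2 γ1 γ2 (toX2 Q) =
      mfrac γ1 (MvPolynomial.X 0) 0 w1 * toX2 (polyAct1 w2 γ2 Q) := by
  have := polyAct2_pow_mul_toX2 (w1 := w1) h (Nat.zero_le w1) γ1 γ2
  rwa [pow_zero, one_mul, Nat.sub_zero] at this

theorem act_vert {w1 w2 : ℕ} {Q : Polynomial ℚ} (h : Q.natDegree ≤ w2) (γ1 γ2 : SL2Z) :
    polyAct2 w1 w2 γ1 γ2 (MvPolynomial.X 0 ^ w1 * toX2 Q) =
      mfrac γ1 (MvPolynomial.X 0) w1 0 * toX2 (polyAct1 w2 γ2 Q) := by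
  have := polyAct2_pow_mul_toX2 (w1 := w1) h (le_refl w1) γ1 γ2
  rwa [Nat.sub_self] at this

section Hside

theorem H_SS {w1 w2 : ℕ} {Q : Polynomial ℚ} (hw2e : Even w2) (hdeg : Q.natDegree ≤ w1)
    (hs : polyAct1 w1 matS Q = -Q) : polyAct2 w1 w2 matS matS (toX1 Q) = -(toX1 Q * MvPolynomial.X 1 ^ w2) := by
  rw [act_toX1 hdeg, hs, toX1_neg, mfrac_S, hw2e.neg_pow, neg_mul]

theorem H_SUS {w1 w2 : ℕ} {Q : Polynomial ℚ} (hdeg : Q.natDegree ≤ w1)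
    (hs : polyAct1 w1 matS Q = -Q) : polyAct2 w1 w2 matS (matU * matS) (toX1 Q) =
    -(toX1 Q * (1 - MvPolynomial.X 1) ^ w2) := by
  rw [act_toX1 hdeg, hs, toX1_neg, mfrac_US, pow_zero, one_mul, neg_mul]

theorem H_USUS {w1 w2 : ℕ} {Q : Polynomial ℚ} (hw2e : Even w2) (hdeg : Q.natDegree ≤ w1)
    (hs : polyAct1 w1 matS Q = -Q) : polyAct2 w1 w2 (matU * matS) (matU * matS) (toX1 Q) =
    -(toX1 (polyAct1 w1 matU Q) * (MvPolynomial.X 1 - 1) ^ w2) := by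
  rw [← polyAct2_comp, H_SS hw2e hdeg hs, polyAct2_neg,
    polyAct2_toX1_mul hdeg (le_refl w2), mfrac_U, Nat.sub_self, pow_zero, mul_one]

theorem H_1U {w1 w2 : ℕ} {Q : Polynomial ℚ} (hdeg : Q.natDegree ≤ w1) : polyAct2 w1 w2 1 matU (toX1 Q) = toX1 Q * MvPolynomial.X 1 ^ w2 := by
  rw [act_toX1 hdeg, polyAct1_one hdeg, mfrac_U, pow_zero, one_mul]

theorem H_U2U2 {w1 w2 : ℕ} {Q : Polynomial ℚ} (hdeg : Q.natDegree ≤ w1) : polyAct2 w1 w2 (matU ^ 2) (matU ^ 2) (toX1 Q) =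
    toX1 (polyAct1 w1 (matU ^ 2) Q) * (MvPolynomial.X 1 - 1) ^ w2 := by
  rw [act_toX1 hdeg, mfrac_U2, pow_zero, one_mul]

theorem R2_h {w1 w2 : ℕ} {Q : Polynomial ℚ} (hw2e : Even w2) (hdeg : Q.natDegree ≤ w1)
    (hs : polyAct1 w1 matS Q = -Q) (hu : Q + polyAct1 w1 matU Q + polyAct1 w1 (matU ^ 2) Q = 0) :
    polyAct2 w1 w2 matS matS (toX1 Q) + polyAct2 w1 w2 matS (matU * matS) (toX1 Q) +
      polyAct2 w1 w2 (matU * matS) (matU * matS) (toX1 Q) + polyAct2 w1 w2 1 matU (toX1 Q) -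
      polyAct2 w1 w2 (matU ^ 2) (matU ^ 2) (toX1 Q) = 0 := by
  rw [H_SS hw2e hdeg hs, H_SUS hdeg hs, H_USUS hw2e hdeg hs, H_1U hdeg, H_U2U2 hdeg]
  have hsum : toX1 Q + toX1 (polyAct1 w1 matU Q) + toX1 (polyAct1 w1 (matU ^ 2) Q) = 0 := by
    rw [← toX1_add, ← toX1_add, hu, toX1_zero]
  have hflip : (1 - MvPolynomial.X 1 : MvPolynomial (Fin 2) ℚ) ^ w2 =
      (MvPolynomial.X 1 - 1) ^ w2 := by
    rw [← neg_sub, hw2e.neg_pow]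
  rw [hflip]
  linear_combination (-((MvPolynomial.X 1 - 1 : MvPolynomial (Fin 2) ℚ) ^ w2)) * hsum

end Hside

section Vside

theorem V_SS {w1 w2 : ℕ} {Q : Polynomial ℚ} (hdeg : Q.natDegree ≤ w2)
    (hs : polyAct1 w2 matS Q = -Q) : polyAct2 w1 w2 matS matS (MvPolynomial.X 0 ^ w1 * toX2 Q) = -toX2 Q := by
  rw [act_vert hdeg, hs, toX2_neg, mfrac_S, pow_zero, one_mul]

theorem V_SUS {w1 w2 : ℕ} {Q : Polynomial ℚ} (hdeg : Q.natDegree ≤ w2)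
    (hs : polyAct1 w2 matS Q = -Q) : polyAct2 w1 w2 matS (matU * matS) (MvPolynomial.X 0 ^ w1 * toX2 Q) =
    -toX2 (polyAct1 w2 matU Q) := by
  have hc := polyAct2_comp w1 w2 1 matU matS matS (MvPolynomial.X 0 ^ w1 * toX2 Q)
  rw [one_mul] at hc
  rw [← hc, V_SS hdeg hs, ← toX2_neg, act_toX2 (by simpa using hdeg) 1 matU,
    mfrac_one, pow_zero, one_mul, polyAct1_neg, toX2_neg]

theorem V_USUS {w1 w2 : ℕ} {Q : Polynomial ℚ} (hdeg : Q.natDegree ≤ w2)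
    (hs : polyAct1 w2 matS Q = -Q) : polyAct2 w1 w2 (matU * matS) (matU * matS)
    (MvPolynomial.X 0 ^ w1 * toX2 Q) =
    -(MvPolynomial.X 0 ^ w1 * toX2 (polyAct1 w2 matU Q)) := by
  rw [← polyAct2_comp, V_SS hdeg hs, ← toX2_neg, act_toX2 (by simpa using hdeg) matU matU,
    mfrac_U, pow_zero, one_mul, polyAct1_neg, toX2_neg]
  ring

theorem V_1U {w1 w2 : ℕ} {Q : Polynomial ℚ} (hdeg : Q.natDegree ≤ w2) : polyAct2 w1 w2 1 matU (MvPolynomial.X 0 ^ w1 * toX2 Q) =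
    MvPolynomial.X 0 ^ w1 * toX2 (polyAct1 w2 matU Q) := by
  rw [act_vert hdeg, mfrac_one]

theorem V_U2U2 {w1 w2 : ℕ} {Q : Polynomial ℚ} (hw1e : Even w1) (hdeg : Q.natDegree ≤ w2) : polyAct2 w1 w2 (matU ^ 2) (matU ^ 2) (MvPolynomial.X 0 ^ w1 * toX2 Q) =
    toX2 (polyAct1 w2 (matU ^ 2) Q) := by
  rw [act_vert hdeg, mfrac_U2, pow_zero, mul_one, hw1e.neg_one_pow, one_mul]

theorem R2_v {w1 w2 : ℕ} {Q : Polynomial ℚ} (hw1e : Even w1) (hdeg : Q.natDegree ≤ w2)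
    (hs : polyAct1 w2 matS Q = -Q) (hu : Q + polyAct1 w2 matU Q + polyAct1 w2 (matU ^ 2) Q = 0) :
    polyAct2 w1 w2 matS matS (MvPolynomial.X 0 ^ w1 * toX2 Q) +
      polyAct2 w1 w2 matS (matU * matS) (MvPolynomial.X 0 ^ w1 * toX2 Q) +
      polyAct2 w1 w2 (matU * matS) (matU * matS) (MvPolynomial.X 0 ^ w1 * toX2 Q) +
      polyAct2 w1 w2 1 matU (MvPolynomial.X 0 ^ w1 * toX2 Q) -
      polyAct2 w1 w2 (matU ^ 2) (matU ^ 2) (MvPolynomial.X 0 ^ w1 * toX2 Q) = 0 := by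
  rw [V_SS hdeg hs, V_SUS hdeg hs, V_USUS hdeg hs, V_1U hdeg, V_U2U2 hw1e hdeg]
  have hsum : toX2 Q + toX2 (polyAct1 w2 matU Q) + toX2 (polyAct1 w2 (matU ^ 2) Q) = 0 := by
    rw [← toX2_add, ← toX2_add, hu, toX2_zero]
  linear_combination -hsum

end Vside

/-- For `P ∈ W_{w1,w2}^ℚ`, the polynomial `((1,1)+(S,S))·P` lies in
`W_{w1}^ℚ⊗E_{w2}^ℚ + E_{w1}^ℚ⊗W_{w2}^ℚ` iff `P ∈ E_{w1,w2}^ℚ` : the kernel of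
`Φ_S : W_{w1,w2}^ℚ → (W_{w1}^ℚ/E_{w1}^ℚ) ⊗ (W_{w2}^ℚ/E_{w2}^ℚ)` equals `E_{w1,w2}^ℚ`. -/
theorem kernel_of_PhiS_eq_E (w1 w2 : ℕ) (hw1 : Even w1) (hw2 : Even w2)
    (hw1' : 2 ≤ w1) (hw2' : 2 ≤ w2) (P : MvPolynomial (Fin 2) ℚ) (hP : MemW2 w1 w2 P) :
    (∃ P1 P2 : Polynomial ℚ, MemW1 w1 P1 ∧ MemW1 w2 P2 ∧
        P + polyAct2 w1 w2 matS matS P =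
          toX1 P1 * (1 - MvPolynomial.X 1 ^ w2) + (1 - MvPolynomial.X 0 ^ w1) * toX2 P2) ↔
      MemE w1 w2 P := by
  constructor
  · rintro ⟨P1, P2, hP1, hP2, heq⟩
    obtain ⟨hdeg1, hs1', hu1⟩ := hP1
    have hs1 : polyAct1 w1 matS P1 = -P1 := by linear_combination hs1'
    have hP2' := MemW1_neg hP2
    obtain ⟨hdeg2, hs2', hu2⟩ := hP2'
    have hs2 : polyAct1 w2 matS (-P2) = -(-P2) := by linear_combination hs2'
    refine ⟨toX1 P1, P - toX1 P1 - MvPolynomial.X 0 ^ w1 * toX2 (-P2),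
      MvPolynomial.X 0 ^ w1 * toX2 (-P2), ⟨P1, ⟨hdeg1, hs1', hu1⟩, rfl⟩, ?_,
      ⟨-P2, ⟨hdeg2, hs2', hu2⟩, rfl⟩, by ring⟩
    have hSSh := H_SS (w1 := w1) hw2 hdeg1 hs1
    have hSSv := V_SS (w1 := w1) hdeg2 hs2
    have hneg2 : toX2 (-P2) = -toX2 P2 := toX2_neg P2
    have hdelta : (P - toX1 P1 - MvPolynomial.X 0 ^ w1 * toX2 (-P2)) +
        polyAct2 w1 w2 matS matS
          (P - toX1 P1 - MvPolynomial.X 0 ^ w1 * toX2 (-P2)) = 0 := by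
      rw [polyAct2_sub, polyAct2_sub, hSSh, hSSv]
      linear_combination heq + (1 - MvPolynomial.X 0 ^ w1 : MvPolynomial (Fin 2) ℚ) * hneg2
    refine ⟨?_, hdelta, ?_⟩
    · exact memV2_sub (memV2_sub hP.1 (memV2_toX1 w2 hdeg1)) (memV2_vert w1 hdeg2)
    · have hR2P := hP.2.2.1
      have hR2h := R2_h (w2 := w2) hw2 hdeg1 hs1 hu1
      have hR2v := R2_v (w1 := w1) hw1 hdeg2 hs2 hu2
      have hR2d : polyAct2 w1 w2 matS matS
            (P - toX1 P1 - MvPolynomial.X 0 ^ w1 * toX2 (-P2)) +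
          polyAct2 w1 w2 matS (matU * matS)
            (P - toX1 P1 - MvPolynomial.X 0 ^ w1 * toX2 (-P2)) +
          polyAct2 w1 w2 (matU * matS) (matU * matS)
            (P - toX1 P1 - MvPolynomial.X 0 ^ w1 * toX2 (-P2)) +
          polyAct2 w1 w2 1 matU
            (P - toX1 P1 - MvPolynomial.X 0 ^ w1 * toX2 (-P2)) -
          polyAct2 w1 w2 (matU ^ 2) (matU ^ 2)
            (P - toX1 P1 - MvPolynomial.X 0 ^ w1 * toX2 (-P2)) = 0 := by
        simp only [polyAct2_sub]
        linear_combination hR2P - hR2h - hR2v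
      have hSSd : polyAct2 w1 w2 matS matS
          (P - toX1 P1 - MvPolynomial.X 0 ^ w1 * toX2 (-P2)) =
          -(P - toX1 P1 - MvPolynomial.X 0 ^ w1 * toX2 (-P2)) := by
        linear_combination hdelta
      have hc1 : polyAct2 w1 w2 matS (matU * matS)
          (P - toX1 P1 - MvPolynomial.X 0 ^ w1 * toX2 (-P2)) =
          polyAct2 w1 w2 1 matU (polyAct2 w1 w2 matS matS
            (P - toX1 P1 - MvPolynomial.X 0 ^ w1 * toX2 (-P2))) := by
        rw [polyAct2_comp, one_mul]
      have hc2 : polyAct2 w1 w2 (matU * matS) (matU * matS)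
          (P - toX1 P1 - MvPolynomial.X 0 ^ w1 * toX2 (-P2)) =
          polyAct2 w1 w2 matU matU (polyAct2 w1 w2 matS matS
            (P - toX1 P1 - MvPolynomial.X 0 ^ w1 * toX2 (-P2))) := by
        rw [polyAct2_comp]
      rw [hc1, hc2, hSSd, polyAct2_neg, polyAct2_neg] at hR2d
      linear_combination -hR2d
  · rintro ⟨h0, d0, v0, ⟨P1, hP1, rfl⟩, hd, ⟨P2v, hP2v, rfl⟩, rfl⟩
    refine ⟨P1, -P2v, hP1, MemW1_neg hP2v, ?_⟩
    have hs1 : polyAct1 w1 matS P1 = -P1 := by linear_combination hP1.2.1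
    have hs2 : polyAct1 w2 matS P2v = -P2v := by linear_combination hP2v.2.1
    rw [polyAct2_add, polyAct2_add, H_SS (w1 := w1) hw2 hP1.1 hs1,
      V_SS (w1 := w1) hP2v.1 hs2]
    have hSSd : polyAct2 w1 w2 matS matS d0 = -d0 := by linear_combination hd.2.1
    rw [hSSd, toX2_neg]
    ring
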